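/- For a family {A_i}_{i∈I} of groups, the torsion length of the free product *_{i∈I} A_i equals the supremum of the torsion lengths of the A_i. -/

import Mathlib

/-- Auxiliary: the iterated torsion subgroups bundled with proofs of normality. -/
def torIterAux (G : Type*) [Group G] : ℕ → {N : Subgroup G // N.Normal}
  | 0 => ⟨⊥, inferInstance⟩
  | (i + 1) =>
    let p := torIterAux G i
    haveI := p.2
    ⟨(Subgroup.normalClosure {x : G ⧸ p.1 | IsOfFinOrder x}).comap (QuotientGroup.mk' p.1),
      Subgroup.Normal.comap Subgroup.normalClosure_normal _⟩

/-- `torIter G i` is `Tor_i(G)`: `Tor_0(G) = {e}` and `Tor_{i+1}(G)` is the preimage in `G`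
of the normal closure of the set of torsion elements of `G / Tor_i(G)`. -/
def torIter (G : Type*) [Group G] (i : ℕ) : Subgroup G := (torIterAux G i).1

instance torIter_normal (G : Type*) [Group G] (i : ℕ) : (torIter G i).Normal :=
  (torIterAux G i).2

theorem torIter_succ (G : Type*) [Group G] (i : ℕ) :
    torIter G (i + 1) =
      (Subgroup.normalClosure {x : G ⧸ torIter G i | IsOfFinOrder x}).comap
        (QuotientGroup.mk' (torIter G i)) := rfl

theorem torIter_mono (G : Type*) [Group G] : Monotone (torIter G) := by
  apply monotone_nat_of_le_succ
  intro i
  rw [torIter_succ]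
  calc torIter G i = (QuotientGroup.mk' (torIter G i)).ker := (QuotientGroup.ker_mk' _).symm
    _ ≤ _ := Subgroup.ker_le_comap _ _

/-- `Tor_∞(G)`, the union of all the `Tor_i(G)`. -/
def torInf (G : Type*) [Group G] : Subgroup G := ⨆ i, torIter G i

instance torInf_normal (G : Type*) [Group G] : (torInf G).Normal := by
  constructor
  intro n hn g
  rw [torInf, Subgroup.mem_iSup_of_directed ((torIter_mono G).directed_le)] at hn
  obtain ⟨i, hi⟩ := hn
  exact le_iSup (torIter G) i ((torIter_normal G i).conj_mem n hi g)

/-- The torsion length of `G`: the smallest `n` with `Tor_n(G) = Tor_∞(G)`, or `∞`. -/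
noncomputable def torLen (G : Type*) [Group G] : ℕ∞ :=
  sInf ((↑) '' {n : ℕ | torIter G n = torInf G})

open Monoid


open Monoid Subgroup

namespace TorLenAux

variable {ι : Type*} [DecidableEq ι] {M : ι → Type*} [∀ i, Group (M i)] [∀ i, DecidableEq (M i)]

open Monoid.CoprodI Monoid.CoprodI.Word

theorem rcons_eq (i : ι) (w : Word M) :
    Word.rcons (Word.equivPair i w) = w := by
  rw [← equivPair_symm]; exact (Word.equivPair i).symm_apply_apply w

theorem tail_len_le (i : ι) (w : Word M) :
    (Word.equivPair i w).tail.toList.length ≤ w.toList.length := by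
  have h := rcons_eq i w
  by_cases hh : (Word.equivPair i w).head = 1
  · rw [Word.rcons, dif_pos hh] at h
    rw [h]
  · rw [Word.rcons, dif_neg hh] at h
    have := congrArg Word.toList h
    simp only [Word.cons] at this
    rw [← this]
    simp

theorem exists_cons_of_fstIdx {i : ι} {w : Word M} (h : Word.fstIdx w = some i) :
    (Word.equivPair i w).head ≠ 1 ∧
      w.toList = ⟨i, (Word.equivPair i w).head⟩ :: (Word.equivPair i w).tail.toList := by
  have hr := rcons_eq i w
  by_cases hh : (Word.equivPair i w).head = 1
  · exfalso
    rw [Word.rcons, dif_pos hh] at hr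
    exact (Word.equivPair i w).fstIdx_ne (hr.symm ▸ h)
  · refine ⟨hh, ?_⟩
    rw [Word.rcons, dif_neg hh] at hr
    have := congrArg Word.toList hr
    simp only [Word.cons] at this
    exact this.symm

theorem smul_len_le {i : ι} (m : M i) (w : Word M) :
    (CoprodI.of m • w).toList.length ≤ w.toList.length + 1 := by
  rw [Word.of_smul_def]
  rw [Word.rcons]
  split_ifs with h
  · exact le_trans (tail_len_le i w) (Nat.le_succ _)
  · simp only [Word.cons]
    simpa using Nat.succ_le_succ (tail_len_le i w)

theorem smul_len_le_of_fstIdx {i : ι} (m : M i) (w : Word M) (h : Word.fstIdx w = some i) :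
    (CoprodI.of m • w).toList.length ≤ w.toList.length := by
  obtain ⟨hh, hlist⟩ := exists_cons_of_fstIdx h
  have htail : (Word.equivPair i w).tail.toList.length + 1 = w.toList.length := by
    rw [hlist]; simp
  rw [Word.of_smul_def, Word.rcons]
  split_ifs with h'
  · dsimp only
    omega
  · simp only [Word.cons, List.length_cons]
    omega


theorem _root_.List.getLast?_cons_ne {α : Type*} (a : α) {l : List α} (h : l ≠ []) :
    (a :: l).getLast? = l.getLast? := by
  cases l with
  | nil => exact absurd rfl h
  | cons b t => simp

theorem _root_.List.head?_append_ne {α : Type*} {l l' : List α} (h : l ≠ []) :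
    (l ++ l').head? = l.head? := by
  cases l with
  | nil => exact absurd rfl h
  | cons b t => simp

theorem prod_smul_toList (w : Word M) : ∀ (u : Word M),
    (∀ p ∈ w.toList.getLast?, ∀ q ∈ u.toList.head?, Sigma.fst p ≠ Sigma.fst q) →
    (w.prod • u).toList = w.toList ++ u.toList := by
  induction w using Word.consRecOn with
  | empty =>
    intro u _
    simp [Word.prod_empty]
  | cons i m w' h1 h2 ih =>
    intro u hu
    rw [Word.prod_cons _ m w' h2 h1, mul_smul]
    rcases eq_or_ne w'.toList [] with hnil | hnil
    · have hw' : w' = Word.empty := Word.ext hnil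
      subst hw'
      rw [Word.prod_empty, one_smul]
      have hlast : (Word.cons m Word.empty h1 h2).toList.getLast? = some ⟨i, m⟩ := by
        simp [Word.cons]
      have hfst : u.fstIdx ≠ some i := by
        rw [Word.fstIdx_ne_iff]
        intro l hl
        exact fun hil => hu ⟨i, m⟩ (by simp [hlast]) l hl (by simp [← hil])
      rw [← Word.cons_eq_smul (h1 := hfst) (h2 := h2)]
      simp [Word.cons]
    · have hlast : (Word.cons m w' h1 h2).toList.getLast? = w'.toList.getLast? := by
        simp only [Word.cons]
        exact List.getLast?_cons_ne _ hnil
      have ihres := ih u (by rw [← hlast]; exact hu)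
      have hfst : (w'.prod • u).fstIdx ≠ some i := by
        rw [Word.fstIdx_ne_iff]
        intro l hl
        rw [ihres] at hl
        rw [List.head?_append_ne hnil] at hl
        have : w'.fstIdx ≠ some i := h1
        rw [Word.fstIdx_ne_iff] at this
        exact this l hl
      rw [← Word.cons_eq_smul (h1 := hfst) (h2 := h2)]
      simp only [Word.cons, ihres]
      rfl

theorem prod_smul_len_lt (w : Word M) : ∀ (u : Word M),
    (∃ p ∈ w.toList.getLast?, ∃ q ∈ u.toList.head?, Sigma.fst p = Sigma.fst q) →
    (w.prod • u).toList.length + 1 ≤ w.toList.length + u.toList.length := by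
  induction w using Word.consRecOn with
  | empty =>
    rintro u ⟨p, hp, -⟩
    simp [Word.empty] at hp
  | cons i m w' h1 h2 ih =>
    intro u hu
    rw [Word.prod_cons _ m w' h2 h1, mul_smul]
    rcases eq_or_ne w'.toList [] with hnil | hnil
    · have hw' : w' = Word.empty := Word.ext hnil
      subst hw'
      rw [Word.prod_empty, one_smul]
      obtain ⟨p, hp, q, hq, hpq⟩ := hu
      have hp' : p = ⟨i, m⟩ := by
        simp [Word.cons] at hp
        exact hp.symm
      have hfst : u.fstIdx = some i := by
        rw [Word.fstIdx]
        cases hq' : u.toList.head? with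
        | none => simp [hq'] at hq
        | some q' =>
          simp [hq'] at hq
          subst hq
          simp [← hpq, hp']
      have := smul_len_le_of_fstIdx m u hfst
      simp [Word.cons]
      omega
    · have hlast : (Word.cons m w' h1 h2).toList.getLast? = w'.toList.getLast? := by
        simp only [Word.cons]
        exact List.getLast?_cons_ne _ hnil
      have ihres := ih u (by rw [← hlast]; exact hu)
      have := smul_len_le m (w'.prod • u)
      simp only [Word.cons, List.length_cons]
      omega

theorem not_isOfFinOrder_of_cyclically_reduced {w : Word M}
    (hne : w.toList ≠ [])
    (hij : ∀ p ∈ w.toList.head?, ∀ q ∈ w.toList.getLast?, Sigma.fst q ≠ Sigma.fst p) :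
    ¬ IsOfFinOrder w.prod := by
  have key : ∀ n : ℕ, ((w.prod ^ (n + 1)) • (Word.empty : Word M)).toList.head? = w.toList.head? := by
    intro n
    induction n with
    | zero =>
      have : w.prod ^ 1 • (Word.empty : Word M) = w := by
        rw [pow_one]
        exact Word.equiv.apply_symm_apply w
      rw [this]
    | succ n ihn =>
      have hstep : w.prod ^ (n + 2) • (Word.empty : Word M)
          = w.prod • (w.prod ^ (n + 1) • (Word.empty : Word M)) := by
        rw [← mul_smul, ← pow_succ']
      rw [hstep]
      have harg : ∀ p ∈ w.toList.getLast?,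
          ∀ q ∈ ((w.prod ^ (n + 1)) • (Word.empty : Word M)).toList.head?, p.1 ≠ q.1 := by
        intro p hp q hq
        rw [ihn] at hq
        exact hij q hq p hp
      have hcat := prod_smul_toList w _ harg
      rw [hcat, List.head?_append_ne hne]
  intro hfin
  obtain ⟨n, hn, hxn⟩ := isOfFinOrder_iff_pow_eq_one.mp hfin
  obtain ⟨n, rfl⟩ := Nat.exists_eq_succ_of_ne_zero (Nat.pos_iff_ne_zero.mp hn)
  have := key n
  rw [hxn, one_smul] at this
  simp only [Word.empty] at this
  rw [List.head?_eq_none_iff.mpr rfl] at this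
  exact hne (List.head?_eq_none_iff.mp this.symm)


theorem isOfFinOrder_conj {G : Type*} [Group G] {x : G} (h : IsOfFinOrder x) (g : G) :
    IsOfFinOrder (g * x * g⁻¹) := by
  obtain ⟨n, hn, hx⟩ := isOfFinOrder_iff_pow_eq_one.mp h
  exact isOfFinOrder_iff_pow_eq_one.mpr ⟨n, hn, by rw [conj_pow, hx]; group⟩

theorem isOfFinOrder_of_of {i : ι} {m : M i} (h : IsOfFinOrder (CoprodI.of (M := M) m)) :
    IsOfFinOrder m := by
  have horder := orderOf_injective (CoprodI.of : M i →* CoprodI M) (CoprodI.of_injective i) m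
  rw [← orderOf_pos_iff] at h ⊢
  omega

theorem finOrder_mem_normalClosure (n : ℕ) :
    ∀ (x : CoprodI M), (Word.equiv x).toList.length ≤ n → IsOfFinOrder x →
      x ∈ Subgroup.normalClosure (⋃ i, CoprodI.of '' {g : M i | IsOfFinOrder g}) := by
  induction n with
  | zero =>
    intro x hlen hx
    have : Word.equiv x = Word.empty := Word.ext (List.eq_nil_of_length_eq_zero (Nat.le_zero.mp hlen))
    have hx1 : x = 1 := by
      have h2 := congrArg Word.prod this
      rw [Word.prod_empty] at h2
      rw [← h2]
      exact (Word.equiv.left_inv x).symm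
    rw [hx1]
    exact one_mem _
  | succ n ih =>
    have aux : ∀ (w : Word M), w.toList.length ≤ n + 1 → IsOfFinOrder w.prod →
        w.prod ∈ Subgroup.normalClosure (⋃ i, CoprodI.of '' {g : M i | IsOfFinOrder g}) := by
      intro w
      induction w using Word.consRecOn with
      | empty =>
        intro _ _
        rw [Word.prod_empty]
        exact one_mem _
      | cons i m t h1 h2 _ =>
        intro hlen hx
        have hprod : (Word.cons m t h1 h2).prod = CoprodI.of m * t.prod :=
          Word.prod_cons _ _ _ h2 h1
        rcases eq_or_ne t.toList [] with hnil | hnil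
        · have ht : t = Word.empty := Word.ext hnil
          subst ht
          rw [hprod, Word.prod_empty, mul_one] at hx ⊢
          exact subset_normalClosure
            (Set.mem_iUnion.mpr ⟨i, Set.mem_image_of_mem _
              (show m ∈ {g : M i | IsOfFinOrder g} from isOfFinOrder_of_of hx)⟩)
        · set q := t.toList.getLast hnil with hqdef
          have hqlast : t.toList.getLast? = some q := List.getLast?_eq_getLast hnil
          by_cases hq : q.1 = i
          · set y := t.prod * CoprodI.of m with hy
            have hconj : (Word.cons m t h1 h2).prod = CoprodI.of m * y * (CoprodI.of m)⁻¹ := by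
              rw [hprod, hy]; group
            have hyfin : IsOfFinOrder y := by
              have : y = (CoprodI.of m)⁻¹ * (Word.cons m t h1 h2).prod * ((CoprodI.of m)⁻¹)⁻¹ := by
                rw [hconj]; group
              rw [this]
              exact isOfFinOrder_conj hx _
            have hfeidx : Word.fstIdx (Word.empty : Word M) ≠ some i := by
              simp [Word.fstIdx, Word.empty]
            have hu : CoprodI.of m • (Word.empty : Word M)
                = Word.cons m Word.empty hfeidx h2 := (Word.cons_eq_smul).symm
            have hyw : Word.equiv y = t.prod • (Word.cons m Word.empty hfeidx h2) := by
              show y • (Word.empty : Word M) = _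
              rw [hy, mul_smul, hu]
            have hlt := prod_smul_len_lt t (Word.cons m Word.empty hfeidx h2)
              ⟨q, by rw [hqlast]; rfl, ⟨i, m⟩, by simp [Word.cons], hq⟩
            have hlen2 : (Word.equiv y).toList.length ≤ n := by
              rw [hyw]
              have hcl : (Word.cons m t h1 h2).toList.length = t.toList.length + 1 := by
                simp [Word.cons]
              simp only [Word.cons, Word.empty] at hlt ⊢
              simp at hlt
              omega
            have hyK := ih y hlen2 hyfin
            rw [hconj]
            exact Subgroup.normalClosure_normal.conj_mem y hyK (CoprodI.of m)
          · exfalso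
            refine not_isOfFinOrder_of_cyclically_reduced (w := Word.cons m t h1 h2) ?_ ?_ hx
            · simp [Word.cons]
            · intro p hp q' hq'
              have hp' : p = ⟨i, m⟩ := by
                simp [Word.cons] at hp
                exact hp.symm
              have hq'' : q' = q := by
                rw [show (Word.cons m t h1 h2).toList.getLast? = some q by
                  simp only [Word.cons]
                  rw [List.getLast?_cons_ne _ hnil, hqlast]] at hq'
                simpa using hq'.symm
              rw [hp', hq'']
              exact hq
    intro x hlen hx
    have hpw : (Word.equiv x).prod = x := Word.equiv.left_inv x
    rw [← hpw] at hx ⊢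
    exact aux _ hlen hx


section GroupLemmas

variable {G H : Type*} [Group G] [Group H]

theorem comap_nc_image (f : G →* H) (hf : Function.Surjective f) (T : Set G) :
    Subgroup.comap f (Subgroup.normalClosure (f '' T)) = Subgroup.normalClosure T ⊔ f.ker := by
  rw [← Subgroup.map_normalClosure T f hf, Subgroup.comap_map_eq]

theorem isOfFinOrder_map_iff_ker (f : G →* H) (x : G) :
    IsOfFinOrder (f x) ↔ ∃ n, 0 < n ∧ x ^ n ∈ f.ker := by
  rw [isOfFinOrder_iff_pow_eq_one]
  constructor
  · rintro ⟨n, hn, h⟩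
    exact ⟨n, hn, by rw [MonoidHom.mem_ker, map_pow]; exact h⟩
  · rintro ⟨n, hn, h⟩
    refine ⟨n, hn, ?_⟩
    rw [← map_pow]
    exact MonoidHom.mem_ker.mp h

end GroupLemmas

section FreeProd

open Monoid Monoid.CoprodI

variable {ι : Type*} {A : ι → Type*} [∀ i, Group (A i)]

/-- The canonical map from a free product to the free product of quotients. -/
def phi (N : ∀ i, Subgroup (A i)) [∀ i, (N i).Normal] :
    CoprodI A →* CoprodI (fun i => A i ⧸ N i) :=
  CoprodI.lift (fun i => (CoprodI.of (M := fun i => A i ⧸ N i)).comp (QuotientGroup.mk' (N i)))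

theorem phi_of (N : ∀ i, Subgroup (A i)) [∀ i, (N i).Normal] {i : ι} (a : A i) :
    phi N (CoprodI.of a) = CoprodI.of (M := fun i => A i ⧸ N i) (QuotientGroup.mk' (N i) a) := by
  simp [phi]

theorem phi_surjective (N : ∀ i, Subgroup (A i)) [∀ i, (N i).Normal] :
    Function.Surjective (phi N) := by
  intro x
  induction x using CoprodI.induction_on with
  | one => exact ⟨1, map_one _⟩
  | of i b =>
    obtain ⟨a, rfl⟩ := QuotientGroup.mk'_surjective (N i) b
    exact ⟨CoprodI.of a, phi_of N a⟩
  | mul x y hx hy =>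
    obtain ⟨a, rfl⟩ := hx
    obtain ⟨b, rfl⟩ := hy
    exact ⟨a * b, map_mul _ _ _⟩

theorem ker_phi (N : ∀ i, Subgroup (A i)) [∀ i, (N i).Normal] :
    (phi N).ker = Subgroup.normalClosure (⋃ i, CoprodI.of '' (N i : Set (A i))) := by
  apply le_antisymm
  · set K := Subgroup.normalClosure (⋃ i, CoprodI.of '' (N i : Set (A i))) with hK
    have hSK : ∀ (i : ι) (a : A i), a ∈ N i → (CoprodI.of a : CoprodI A) ∈ K :=
      fun i a ha => Subgroup.subset_normalClosure (Set.mem_iUnion.mpr ⟨i, ⟨a, ha, rfl⟩⟩)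
    have hle : ∀ i : ι, N i ≤ ((QuotientGroup.mk' K).comp (CoprodI.of (M := A) (i := i))).ker := by
      intro i a ha
      rw [MonoidHom.mem_ker, MonoidHom.comp_apply]
      exact (QuotientGroup.eq_one_iff _).mpr (hSK i a ha)
    set psi : CoprodI (fun i => A i ⧸ N i) →* CoprodI A ⧸ K :=
      CoprodI.lift (fun i => QuotientGroup.lift (N i)
        ((QuotientGroup.mk' K).comp CoprodI.of) (hle i)) with hpsi
    have hcomp : ∀ x : CoprodI A, psi (phi N x) = QuotientGroup.mk' K x := by
      intro x
      induction x using CoprodI.induction_on with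
      | one => simp
      | of i a =>
        rw [phi_of]
        simp [psi]
      | mul x y hx hy => rw [map_mul, map_mul, hx, hy, map_mul]
    intro x hx
    have h1 := hcomp x
    rw [MonoidHom.mem_ker.mp hx, map_one] at h1
    exact (QuotientGroup.eq_one_iff _).mp h1.symm
  · apply Subgroup.normalClosure_le_normal
    intro x hx
    simp only [Set.mem_iUnion, Set.mem_image, SetLike.mem_coe] at hx
    obtain ⟨i, a, ha, rfl⟩ := hx
    rw [SetLike.mem_coe, MonoidHom.mem_ker, phi_of,
      map_eq_one_iff _ (CoprodI.of_injective i)]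
    exact (QuotientGroup.eq_one_iff _).mpr ha

theorem comap_of_ker_phi (N : ∀ i, Subgroup (A i)) [∀ i, (N i).Normal] (i : ι) :
    Subgroup.comap (CoprodI.of (M := A) (i := i)) (phi N).ker = N i := by
  ext a
  rw [Subgroup.mem_comap, MonoidHom.mem_ker, phi_of,
    map_eq_one_iff _ (CoprodI.of_injective i)]
  constructor
  · intro h
    exact (QuotientGroup.eq_one_iff _).mp h
  · intro h
    exact (QuotientGroup.eq_one_iff _).mpr h

theorem nc_image_nc (S : ∀ i, Set (A i)) :
    Subgroup.normalClosure (⋃ i, CoprodI.of '' (Subgroup.normalClosure (S i) : Set (A i)))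
      = Subgroup.normalClosure (⋃ i, CoprodI.of '' S i) := by
  apply le_antisymm
  · apply Subgroup.normalClosure_le_normal
    intro x hx
    simp only [Set.mem_iUnion, Set.mem_image, SetLike.mem_coe] at hx
    obtain ⟨i, g, hg, rfl⟩ := hx
    haveI : (Subgroup.comap (CoprodI.of (M := A) (i := i))
        (Subgroup.normalClosure (⋃ i, CoprodI.of '' S i))).Normal :=
      Subgroup.Normal.comap Subgroup.normalClosure_normal _
    have hsub : Subgroup.normalClosure (S i) ≤ Subgroup.comap (CoprodI.of (M := A) (i := i))
        (Subgroup.normalClosure (⋃ i, CoprodI.of '' S i)) := by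
      apply Subgroup.normalClosure_le_normal
      intro s hs
      exact Subgroup.subset_normalClosure (Set.mem_iUnion.mpr ⟨i, Set.mem_image_of_mem _ hs⟩)
    exact hsub hg
  · apply Subgroup.normalClosure_mono
    apply Set.iUnion_mono
    intro i
    exact Set.image_mono Subgroup.subset_normalClosure

theorem nc_torsion_coprodI :
    Subgroup.normalClosure {x : CoprodI A | IsOfFinOrder x}
      = Subgroup.normalClosure (⋃ i, CoprodI.of '' {g : A i | IsOfFinOrder g}) := by
  letI : DecidableEq ι := Classical.decEq ι
  letI : ∀ i, DecidableEq (A i) := fun i => Classical.decEq (A i)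
  apply le_antisymm
  · apply Subgroup.normalClosure_le_normal
    intro x hx
    exact finOrder_mem_normalClosure (Word.equiv x).toList.length x le_rfl hx
  · apply Subgroup.normalClosure_le_normal
    intro x hx
    simp only [Set.mem_iUnion, Set.mem_image] at hx
    obtain ⟨i, g, hg, rfl⟩ := hx
    exact Subgroup.subset_normalClosure
      (show _ ∈ {x : CoprodI A | IsOfFinOrder x} from (CoprodI.of (M := A)).isOfFinOrder hg)

end FreeProd


end TorLenAux

section TorIterLemmas

open Monoid Monoid.CoprodI

theorem torIter_zero (G : Type*) [Group G] : torIter G 0 = ⊥ := rfl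

theorem torIter_succ_congr {G : Type*} [Group G] {m n : ℕ} (h : torIter G m = torIter G n) :
    torIter G (m + 1) = torIter G (n + 1) := by
  have key : ∀ (P Q : Subgroup G) (iP : P.Normal) (iQ : Q.Normal), P = Q →
      (Subgroup.normalClosure {x : G ⧸ P | IsOfFinOrder x}).comap (@QuotientGroup.mk' G _ P iP)
        = (Subgroup.normalClosure {x : G ⧸ Q | IsOfFinOrder x}).comap
            (@QuotientGroup.mk' G _ Q iQ) := by
    rintro P Q iP iQ rfl
    rfl
  rw [torIter_succ, torIter_succ]
  exact key _ _ _ _ h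

theorem torIter_of_stable {G : Type*} [Group G] {n : ℕ}
    (h : torIter G (n + 1) = torIter G n) : ∀ m, n ≤ m → torIter G m = torIter G n := by
  intro m hm
  induction m, hm using Nat.le_induction with
  | base => rfl
  | succ m hm ih => rw [torIter_succ_congr ih]; exact h

theorem stable_iff_torInf {G : Type*} [Group G] (n : ℕ) :
    torIter G (n + 1) = torIter G n ↔ torIter G n = torInf G := by
  constructor
  · intro h
    refine le_antisymm (le_iSup (torIter G) n) (iSup_le fun m => ?_)
    rcases le_total m n with h' | h'
    · exact torIter_mono G h'
    · rw [torIter_of_stable h m h']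
  · intro h
    refine le_antisymm ?_ (torIter_mono G (Nat.le_succ n))
    calc torIter G (n + 1) ≤ torInf G := le_iSup (torIter G) (n + 1)
      _ = torIter G n := h.symm

theorem torLen_eq (G : Type*) [Group G] :
    torLen G = sInf ((↑) '' {n : ℕ | torIter G (n + 1) = torIter G n}) := by
  have hset : {n : ℕ | torIter G n = torInf G} = {n : ℕ | torIter G (n + 1) = torIter G n} :=
    Set.ext fun n => (stable_iff_torInf n).symm
  rw [torLen, hset]

variable {ι : Type*} {A : ι → Type*} [∀ i, Group (A i)]

theorem torIter_coprodI' (n : ℕ) :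
    torIter (CoprodI A) n
      = Subgroup.normalClosure (⋃ i, CoprodI.of '' (torIter (A i) n : Set (A i))) := by
  induction n with
  | zero =>
    simp only [torIter_zero]
    refine le_antisymm bot_le ?_
    apply Subgroup.normalClosure_le_normal
    intro x hx
    simp only [Set.mem_iUnion, Set.mem_image, Subgroup.coe_bot, Set.mem_singleton_iff] at hx
    obtain ⟨i, a, rfl, rfl⟩ := hx
    simp [Subgroup.mem_bot]
  | succ n ih =>
    have hNT : ∀ i, ((torIter (A i) n : Subgroup (A i)) : Set (A i))
        ⊆ (QuotientGroup.mk' (torIter (A i) n)) ⁻¹' {b : A i ⧸ torIter (A i) n | IsOfFinOrder b} := by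
      intro i a ha
      show IsOfFinOrder (QuotientGroup.mk' (torIter (A i) n) a)
      have h1 : QuotientGroup.mk' (torIter (A i) n) a = 1 := (QuotientGroup.eq_one_iff a).mpr ha
      rw [h1]
      exact IsOfFinOrder.one
    have hRHSg : ∀ i, torIter (A i) (n + 1)
        = Subgroup.normalClosure ((QuotientGroup.mk' (torIter (A i) n)) ⁻¹'
            {b : A i ⧸ torIter (A i) n | IsOfFinOrder b}) := by
      intro i
      rw [torIter_succ]
      have himg : QuotientGroup.mk' (torIter (A i) n) ''
          ((QuotientGroup.mk' (torIter (A i) n)) ⁻¹' {b : A i ⧸ torIter (A i) n | IsOfFinOrder b})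
          = {b : A i ⧸ torIter (A i) n | IsOfFinOrder b} :=
        Set.image_preimage_eq _ (QuotientGroup.mk'_surjective (torIter (A i) n))
      have c := TorLenAux.comap_nc_image (QuotientGroup.mk' (torIter (A i) n))
        (QuotientGroup.mk'_surjective (torIter (A i) n))
        ((QuotientGroup.mk' (torIter (A i) n)) ⁻¹' {b : A i ⧸ torIter (A i) n | IsOfFinOrder b})
      rw [himg, QuotientGroup.ker_mk'] at c
      rw [c, sup_eq_left.mpr]
      intro a ha
      exact Subgroup.subset_normalClosure (hNT i ha)
    have hkerφ : (TorLenAux.phi (fun i => torIter (A i) n)).ker = torIter (CoprodI A) n := by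
      rw [TorLenAux.ker_phi]
      exact ih.symm
    have hsurjφ := TorLenAux.phi_surjective (fun i => torIter (A i) n)
    have hsurjmk := QuotientGroup.mk'_surjective (torIter (CoprodI A) n)
    have hT2 : (QuotientGroup.mk' (torIter (CoprodI A) n)) ⁻¹'
          {x : CoprodI A ⧸ torIter (CoprodI A) n | IsOfFinOrder x}
        = (TorLenAux.phi (fun i => torIter (A i) n)) ⁻¹'
            {y : CoprodI (fun i => A i ⧸ torIter (A i) n) | IsOfFinOrder y} := by
      ext x
      simp only [Set.mem_preimage, Set.mem_setOf_eq]
      rw [show IsOfFinOrder (QuotientGroup.mk' (torIter (CoprodI A) n) x)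
            ↔ ∃ k, 0 < k ∧ x ^ k ∈ (QuotientGroup.mk' (torIter (CoprodI A) n)).ker from
          TorLenAux.isOfFinOrder_map_iff_ker _ x,
        TorLenAux.isOfFinOrder_map_iff_ker _ x, QuotientGroup.ker_mk', hkerφ]
    have hLHS : torIter (CoprodI A) (n + 1)
        = Subgroup.normalClosure ((TorLenAux.phi (fun i => torIter (A i) n)) ⁻¹'
            {y : CoprodI (fun i => A i ⧸ torIter (A i) n) | IsOfFinOrder y})
          ⊔ torIter (CoprodI A) n := by
      rw [torIter_succ]
      have himg : QuotientGroup.mk' (torIter (CoprodI A) n) ''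
          ((QuotientGroup.mk' (torIter (CoprodI A) n)) ⁻¹'
            {x : CoprodI A ⧸ torIter (CoprodI A) n | IsOfFinOrder x})
          = {x : CoprodI A ⧸ torIter (CoprodI A) n | IsOfFinOrder x} :=
        Set.image_preimage_eq _ hsurjmk
      have c := TorLenAux.comap_nc_image (QuotientGroup.mk' (torIter (CoprodI A) n)) hsurjmk
        ((QuotientGroup.mk' (torIter (CoprodI A) n)) ⁻¹'
          {x : CoprodI A ⧸ torIter (CoprodI A) n | IsOfFinOrder x})
      rw [himg, QuotientGroup.ker_mk'] at c
      rw [c, hT2]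
    have hφU : (TorLenAux.phi (fun i => torIter (A i) n)) ''
          (⋃ i, CoprodI.of '' ((QuotientGroup.mk' (torIter (A i) n)) ⁻¹'
            {b : A i ⧸ torIter (A i) n | IsOfFinOrder b}))
        = ⋃ i, CoprodI.of '' {b : A i ⧸ torIter (A i) n | IsOfFinOrder b} := by
      rw [Set.image_iUnion]
      refine Set.iUnion_congr fun i => ?_
      rw [← Set.image_comp]
      have hcomp : ((TorLenAux.phi (fun i => torIter (A i) n)) ∘ (CoprodI.of (M := A) (i := i)))
          = (CoprodI.of (M := fun i => A i ⧸ torIter (A i) n)) ∘ (QuotientGroup.mk' (torIter (A i) n)) := by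
        funext a
        exact TorLenAux.phi_of _ a
      rw [hcomp, Set.image_comp,
        Set.image_preimage_eq _ (QuotientGroup.mk'_surjective (torIter (A i) n))]
    have himgφ : (TorLenAux.phi (fun i => torIter (A i) n)) ''
          ((TorLenAux.phi (fun i => torIter (A i) n)) ⁻¹'
            {y : CoprodI (fun i => A i ⧸ torIter (A i) n) | IsOfFinOrder y})
        = {y : CoprodI (fun i => A i ⧸ torIter (A i) n) | IsOfFinOrder y} :=
      Set.image_preimage_eq _ hsurjφ
    have heq : Subgroup.normalClosure ((TorLenAux.phi (fun i => torIter (A i) n)) ⁻¹'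
            {y : CoprodI (fun i => A i ⧸ torIter (A i) n) | IsOfFinOrder y})
          ⊔ torIter (CoprodI A) n
        = Subgroup.normalClosure (⋃ i, CoprodI.of '' ((QuotientGroup.mk' (torIter (A i) n)) ⁻¹'
            {b : A i ⧸ torIter (A i) n | IsOfFinOrder b})) ⊔ torIter (CoprodI A) n := by
      have c1 := TorLenAux.comap_nc_image _ hsurjφ
        ((TorLenAux.phi (fun i => torIter (A i) n)) ⁻¹'
          {y : CoprodI (fun i => A i ⧸ torIter (A i) n) | IsOfFinOrder y})
      have c2 := TorLenAux.comap_nc_image _ hsurjφ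
        (⋃ i, CoprodI.of '' ((QuotientGroup.mk' (torIter (A i) n)) ⁻¹'
          {b : A i ⧸ torIter (A i) n | IsOfFinOrder b}))
      rw [himgφ, hkerφ] at c1
      rw [hφU, hkerφ] at c2
      rw [← c1]
      have := TorLenAux.nc_torsion_coprodI (A := fun i => A i ⧸ torIter (A i) n)
      rw [this, c2]
    have hKle : torIter (CoprodI A) n ≤ Subgroup.normalClosure
        (⋃ i, CoprodI.of '' ((QuotientGroup.mk' (torIter (A i) n)) ⁻¹'
          {b : A i ⧸ torIter (A i) n | IsOfFinOrder b})) := by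
      rw [ih]
      apply Subgroup.normalClosure_mono
      exact Set.iUnion_mono fun i => Set.image_mono (hNT i)
    rw [hLHS, heq, sup_eq_left.mpr hKle]
    rw [show (⋃ i, CoprodI.of '' (torIter (A i) (n + 1) : Set (A i)))
        = ⋃ i, CoprodI.of '' ((Subgroup.normalClosure ((QuotientGroup.mk' (torIter (A i) n)) ⁻¹'
            {b : A i ⧸ torIter (A i) n | IsOfFinOrder b}) : Subgroup (A i)) : Set (A i)) from
      Set.iUnion_congr fun i => by rw [hRHSg i]]
    rw [TorLenAux.nc_image_nc]

theorem torIter_factor (n : ℕ) (i : ι) :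
    torIter (A i) n = Subgroup.comap (CoprodI.of (M := A) (i := i)) (torIter (CoprodI A) n) := by
  rw [torIter_coprodI', ← TorLenAux.ker_phi (fun i => torIter (A i) n),
    TorLenAux.comap_of_ker_phi]

theorem stable_coprodI_iff (n : ℕ) :
    torIter (CoprodI A) (n + 1) = torIter (CoprodI A) n
      ↔ ∀ i, torIter (A i) (n + 1) = torIter (A i) n := by
  constructor
  · intro h i
    rw [torIter_factor (n + 1) i, torIter_factor n i, h]
  · intro h
    rw [torIter_coprodI' (n + 1), torIter_coprodI' n]
    congr 1
    exact Set.iUnion_congr fun i => by rw [h i]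

theorem sInf_image_iInter {κ : Type*} (S : κ → Set ℕ)
    (hup : ∀ i n m, n ≤ m → n ∈ S i → m ∈ S i) :
    sInf (((↑) : ℕ → ℕ∞) '' (⋂ i, S i)) = ⨆ i, sInf (((↑) : ℕ → ℕ∞) '' S i) := by
  apply le_antisymm
  · by_cases hR : (⨆ i, sInf (((↑) : ℕ → ℕ∞) '' S i)) = ⊤
    · rw [hR]; exact le_top
    · obtain ⟨r, hr⟩ := WithTop.ne_top_iff_exists.mp hR
      have hrc : ((r : ℕ) : ℕ∞) = ⨆ i, sInf (((↑) : ℕ → ℕ∞) '' S i) := by exact_mod_cast hr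
      have hmem : ∀ i, r ∈ S i := by
        intro i
        have h1 : sInf (((↑) : ℕ → ℕ∞) '' S i) ≤ (r : ℕ∞) := by
          rw [hrc]; exact le_iSup (fun i => sInf (((↑) : ℕ → ℕ∞) '' S i)) i
        have h2 : sInf (((↑) : ℕ → ℕ∞) '' S i) < (r : ℕ∞) + 1 :=
          lt_of_le_of_lt h1 (by exact_mod_cast Nat.lt_succ_self r)
        obtain ⟨b, hb, hlt⟩ := sInf_lt_iff.mp h2
        obtain ⟨m, hm, rfl⟩ := hb
        have hmr : m ≤ r := by
          have : (m : ℕ∞) < ((r + 1 : ℕ) : ℕ∞) := by exact_mod_cast hlt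
          exact_mod_cast Nat.lt_succ_iff.mp (by exact_mod_cast this)
        exact hup i m r hmr hm
      calc sInf (((↑) : ℕ → ℕ∞) '' (⋂ i, S i)) ≤ (r : ℕ∞) :=
            sInf_le ⟨r, Set.mem_iInter.mpr hmem, rfl⟩
        _ = _ := hrc
  · exact iSup_le fun i => sInf_le_sInf (Set.image_mono (Set.iInter_subset S i))

end TorIterLemmas


/-- The torsion length of a free product `*_i A_i` is the supremum of the torsion lengths of
the factors. -/
theorem torLen_coprodI {ι : Type*} (A : ι → Type*) [∀ i, Group (A i)] :
    torLen (CoprodI A) = ⨆ i : ι, torLen (A i) := by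
  classical
  rcases isEmpty_or_nonempty ι with hι | hι
  · have h0 : torIter (CoprodI A) 1 = torIter (CoprodI A) 0 := by
      rw [torIter_coprodI' 1, torIter_coprodI' 0]
      congr 1
      exact Set.iUnion_congr fun i => (IsEmpty.elim hι i)
    rw [torLen_eq, ciSup_of_empty fun i : ι => torLen (A i)]
    apply le_antisymm
    · refine sInf_le ⟨0, ?_, rfl⟩
      exact h0
    · exact bot_le
  · rw [torLen_eq]
    have h1 : {n : ℕ | torIter (CoprodI A) (n + 1) = torIter (CoprodI A) n}
        = ⋂ i, {n : ℕ | torIter (A i) (n + 1) = torIter (A i) n} := by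
      ext n
      simp only [Set.mem_setOf_eq, Set.mem_iInter]
      exact stable_coprodI_iff n
    rw [h1, sInf_image_iInter _ ?_]
    · exact iSup_congr fun i => (torLen_eq (A i)).symm
    · intro i n m hnm hn
      simp only [Set.mem_setOf_eq] at hn ⊢
      rw [torIter_of_stable hn (m + 1) (le_trans hnm (Nat.le_succ m)),
        torIter_of_stable hn m hnm]
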